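/- arXiv:2212.09111 — 6 statements merged into one kernel-verified Lean document; each statement's English description precedes it below -/
import Mathlib

section
/- Let D, E be elements of a (possibly noncommutative) ring with unit I, and let W be a left module element (row vector) and V a right module element (column vector). Suppose D·E − q·E·D = D + E, W·(α·E − γ·D) = W, and (β·D − δ·E)·V = V, where q = θ₁/θ₂, α = (1−θ₁)a/θ₂, β = (1−θ₂)b/(θ₂(1−b−d)), γ = (1−θ₂)c/θ₂, δ = (1−θ₁)d/(θ₂(1−b−d)). Define D↑ = ((1−θ₂)/θ₂)·D, E↑ = ((1−θ₁)/θ₂)·E, D→ = D↑ + I, E→ = E↑ − I. Then these satisfy: θ₂·D↑·E↑ − θ₁·E↑·D↑ = (1−θ₂)·E↑ + (1−θ₁)·D↑; W·(a·E↑ − c·D↑) = W; and (b·D↑ − d·E↑)·V = (1−b−d)·V. -/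
open MulOpposite

/-- Theorem 2.7: a solution of the DEHP algebra with the transformed parameters
yields a solution of the reduced compatibility relations for the stochastic
six-vertex model on a strip. -/
theorem stmt0 (R M N : Type*) [Ring R] [Algebra ℝ R]
    [AddCommGroup M] [Module R M] [AddCommGroup N] [Module Rᵐᵒᵖ N]
    (θ₁ θ₂ a b c d : ℝ) (hθ₂ : θ₂ ≠ 0) (hbd : 1 - b - d ≠ 0)
    (D E : R) (W : N) (V : M)
    (hbulk : D * E - (θ₁ / θ₂) • (E * D) = D + E)
    (hleft : op (((1 - θ₁) * a / θ₂) • E - ((1 - θ₂) * c / θ₂) • D) • W = W)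
    (hright : (((1 - θ₂) * b / (θ₂ * (1 - b - d))) • D
        - ((1 - θ₁) * d / (θ₂ * (1 - b - d))) • E) • V = V) :
    (θ₂ • ((((1 - θ₂) / θ₂) • D) * (((1 - θ₁) / θ₂) • E))
        - θ₁ • ((((1 - θ₁) / θ₂) • E) * (((1 - θ₂) / θ₂) • D))
      = (1 - θ₂) • (((1 - θ₁) / θ₂) • E) + (1 - θ₁) • (((1 - θ₂) / θ₂) • D))
    ∧ op (a • (((1 - θ₁) / θ₂) • E) - c • (((1 - θ₂) / θ₂) • D)) • W = W
    ∧ (b • (((1 - θ₂) / θ₂) • D) - d • (((1 - θ₁) / θ₂) • E)) • V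
        = algebraMap ℝ R (1 - b - d) • V := by
  refine ⟨?_, ?_, ?_⟩
  · have h1 : θ₂ • ((((1 - θ₂) / θ₂) • D) * (((1 - θ₁) / θ₂) • E))
        - θ₁ • ((((1 - θ₁) / θ₂) • E) * (((1 - θ₂) / θ₂) • D))
        = ((1 - θ₂) * (1 - θ₁) / θ₂) • (D * E - (θ₁ / θ₂) • (E * D)) := by
      rw [smul_mul_smul_comm, smul_mul_smul_comm]
      match_scalars <;> field_simp <;> ring
    rw [h1, hbulk]
    match_scalars <;> field_simp <;> ring
  · have h2 : a • (((1 - θ₁) / θ₂) • E) - c • (((1 - θ₂) / θ₂) • D)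
        = ((1 - θ₁) * a / θ₂) • E - ((1 - θ₂) * c / θ₂) • D := by
      match_scalars <;> ring
    rw [h2, hleft]
  · have h3 : b • (((1 - θ₂) / θ₂) • D) - d • (((1 - θ₁) / θ₂) • E)
        = algebraMap ℝ R (1 - b - d) * ((((1 - θ₂) * b / (θ₂ * (1 - b - d))) • D
          - ((1 - θ₁) * d / (θ₂ * (1 - b - d))) • E)) := by
      rw [mul_sub, ← Algebra.smul_def, ← Algebra.smul_def]
      match_scalars <;> field_simp <;> ring
    rw [h3, mul_smul, hright]
end

section
/- Let θ₁, θ₂, a, b, c, d be real numbers, and suppose matrices D↑, E↑ and vectors W (row), V (column) satisfy: θ₂·D↑·E↑ − θ₁·E↑·D↑ = (1−θ₂)·E↑ + (1−θ₁)·D↑; W·(a·E↑ − c·D↑) = W; (b·D↑ − d·E↑)·V = (1−b−d)·V. Define D→ = D↑ + I and E→ = E↑ − I. Then the following eight relations hold: (1) D↑·D→ = D→·D↑, (2) E↑·E→ = E→·E↑, (3) D↑·E→ = (1−θ₂)·D→·E↑ + θ₁·E→·D↑, (4) E↑·D→ = θ₂·D→·E↑ + (1−θ₁)·E→·D↑,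 (5) W·D→ = (1−c)·W·D↑ + a·W·E↑, (6) W·E→ = (1−a)·W·E↑ + c·W·D↑, (7) D↑·V = (1−b)·D→·V + d·E→·V, (8) E↑·V = (1−d)·E→·V + b·D→·V. -/
open MulOpposite

/-- The three simplified relations imply the eight compatibility relations
for local moves of down-right paths in the six-vertex model on a strip,
under the substitution D→ = D↑ + I, E→ = E↑ − I. -/
theorem stmt1 (R M N : Type*) [Ring R] [Algebra ℝ R]
    [AddCommGroup M] [Module R M] [AddCommGroup N] [Module Rᵐᵒᵖ N]
    (θ₁ θ₂ a b c d : ℝ)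
    (Du Eu : R) (W : N) (V : M)
    (hbulk : θ₂ • (Du * Eu) - θ₁ • (Eu * Du) = (1 - θ₂) • Eu + (1 - θ₁) • Du)
    (hleft : op (a • Eu - c • Du) • W = W)
    (hright : (b • Du - d • Eu) • V = algebraMap ℝ R (1 - b - d) • V) :
    (Du * (Du + 1) = (Du + 1) * Du)
    ∧ (Eu * (Eu - 1) = (Eu - 1) * Eu)
    ∧ (Du * (Eu - 1) = (1 - θ₂) • ((Du + 1) * Eu) + θ₁ • ((Eu - 1) * Du))
    ∧ (Eu * (Du + 1) = θ₂ • ((Du + 1) * Eu) + (1 - θ₁) • ((Eu - 1) * Du))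
    ∧ (op (Du + 1) • W = op ((1 - c) • Du) • W + op (a • Eu) • W)
    ∧ (op (Eu - 1) • W = op ((1 - a) • Eu) • W + op (c • Du) • W)
    ∧ (Du • V = ((1 - b) • (Du + 1)) • V + (d • (Eu - 1)) • V)
    ∧ (Eu • V = ((1 - d) • (Eu - 1)) • V + (b • (Du + 1)) • V) := by
  rw [Algebra.algebraMap_eq_smul_one] at hright
  refine ⟨by noncomm_ring, by noncomm_ring, ?_, ?_, ?_, ?_, ?_, ?_⟩
  · rw [mul_sub, mul_one, add_mul, one_mul, sub_mul, one_mul, smul_sub, smul_add]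
    linear_combination (norm := module) hbulk
  · rw [mul_add, mul_one, add_mul, one_mul, sub_mul, one_mul, smul_sub, smul_add]
    linear_combination (norm := module) -hbulk
  · have e : op (Du + 1) = (op ((1 - c) • Du) + op (a • Eu) + 1) - op (a • Eu - c • Du) := by
      simp only [op_add, op_sub, op_smul, op_one]
      module
    rw [e, sub_smul, add_smul, add_smul, one_smul, hleft]
    abel
  · have e : op (Eu - 1) = (op ((1 - a) • Eu) + op (c • Du) - 1) + op (a • Eu - c • Du) := by
      simp only [op_add, op_sub, op_smul, op_one]
      module
    rw [e, add_smul, sub_smul, add_smul, one_smul, hleft]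
    abel
  · have e : (Du : R) = (1 - b) • (Du + 1) + d • (Eu - 1)
        + ((b • Du - d • Eu) - (1 - b - d) • (1 : R)) := by module
    conv_lhs => rw [e]
    rw [add_smul, add_smul, sub_smul (b • Du - d • Eu) ((1 - b - d) • (1 : R)), hright,
      sub_self, add_zero]
  · have e : (Eu : R) = (1 - d) • (Eu - 1) + b • (Du + 1)
        - ((b • Du - d • Eu) - (1 - b - d) • (1 : R)) := by module
    conv_lhs => rw [e]
    rw [sub_smul, add_smul, sub_smul (b • Du - d • Eu) ((1 - b - d) • (1 : R)), hright,
      sub_self, sub_zero]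
end

section
/- Let a, b, c, d, θ₁, θ₂ be real numbers satisfying (1−θ₁)(a+d−ab−ad)(b+c−bc−ab) = (1−θ₂)(a+d−ad−cd)(b+c−bc−cd). Then the scalars D↑ = a+d−ab−ad, E↑ = b+c−bc−cd, D→ = a+d−ad−cd, E→ = b+c−bc−ab, together with W = V = 1, satisfy: D↑·E→ = (1−θ₂)·D→·E↑ + θ₁·E→·D↑; E↑·D→ = θ₂·D→·E↑ + (1−θ₁)·E→·D↑; D→ = (1−c)·D↑ + a·E↑; E→ = (1−a)·E↑ + c·D↑; D↑ = (1−b)·D→ + d·E→; E↑ = (1−d)·E→ + b·D→. -/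
/-- Scalar (one-dimensional) solution of the compatibility relations giving
the product Bernoulli stationary measure. -/
theorem stmt2 (a b c d θ₁ θ₂ : ℝ)
    (h : (1 - θ₁) * (a + d - a*b - a*d) * (b + c - b*c - a*b)
        = (1 - θ₂) * (a + d - a*d - c*d) * (b + c - b*c - c*d)) :
    let Du : ℝ := a + d - a*b - a*d
    let Eu : ℝ := b + c - b*c - c*d
    let Dr : ℝ := a + d - a*d - c*d
    let Er : ℝ := b + c - b*c - a*b
    (Du * Er = (1 - θ₂) * (Dr * Eu) + θ₁ * (Er * Du))
    ∧ (Eu * Dr = θ₂ * (Dr * Eu) + (1 - θ₁) * (Er * Du))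
    ∧ (Dr = (1 - c) * Du + a * Eu)
    ∧ (Er = (1 - a) * Eu + c * Du)
    ∧ (Du = (1 - b) * Dr + d * Er)
    ∧ (Eu = (1 - d) * Er + b * Dr) := by
  refine ⟨by nlinarith [h], by nlinarith [h], by ring, by ring, by ring, by ring⟩
end

section
/- Let θ₁, θ₂ ∈ ℝ with (1−θ₁) ≥ 0 and (1−θ₂) ≥ 0. Set D→ = E↑ = √(1−θ₁) and D↑ = E→ = √(1−θ₂). Then with a = b = c = d = 1, these scalars satisfy the compatibility relations: D↑·E→ = (1−θ₂)·D→·E↑ + θ₁·E→·D↑; E↑·D→ = θ₂·D→·E↑ + (1−θ₁)·E→·D↑; D→ = (1−c)·D↑ + a·E↑; E→ = (1−a)·E↑ + c·D↑; D↑ = (1−b)·D→ + d·E→; E↑ = (1−d)·E→ + b·D→. -/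
/-- Scalar solution of the compatibility relations in the anti-reflecting
boundary case a = b = c = d = 1. -/
theorem stmt3 (θ₁ θ₂ : ℝ) (h₁ : 0 ≤ 1 - θ₁) (h₂ : 0 ≤ 1 - θ₂) :
    let Dr : ℝ := Real.sqrt (1 - θ₁)
    let Eu : ℝ := Real.sqrt (1 - θ₁)
    let Du : ℝ := Real.sqrt (1 - θ₂)
    let Er : ℝ := Real.sqrt (1 - θ₂)
    let a : ℝ := 1
    let b : ℝ := 1
    let c : ℝ := 1
    let d : ℝ := 1
    (Du * Er = (1 - θ₂) * (Dr * Eu) + θ₁ * (Er * Du))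
    ∧ (Eu * Dr = θ₂ * (Dr * Eu) + (1 - θ₁) * (Er * Du))
    ∧ (Dr = (1 - c) * Du + a * Eu)
    ∧ (Er = (1 - a) * Eu + c * Du)
    ∧ (Du = (1 - b) * Dr + d * Er)
    ∧ (Eu = (1 - d) * Er + b * Dr) := by
  intro Dr Eu Du Er a b c d
  have e1 : Dr * Eu = 1 - θ₁ := Real.mul_self_sqrt h₁
  have e2 : Du * Er = 1 - θ₂ := Real.mul_self_sqrt h₂
  have e2' : Er * Du = 1 - θ₂ := by rw [mul_comm]; exact e2
  have e1' : Eu * Dr = 1 - θ₁ := by rw [mul_comm]; exact e1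
  refine ⟨?_, ?_, ?_, ?_, ?_, ?_⟩ <;> simp [a, b, c, d, e1, e1', e2, e2'] <;> ring
end

section
/- Let r ∈ (0,1), let μ be a finite Borel measure on ℝ supported in (−(1+r)/(2√r), ∞) whose restriction to [−1,1] has a density bounded below by ε·√(1−y²) for some ε > 0, and which has finitely many atoms y₁ > y₂ > … > y_k all lying in (−(1+r)/(2√r), −1). Then lim_{N→∞} [Σⱼ (1+r+2√r·yⱼ)^N·μ({yⱼ})] / [∫_{[−1,1]} (1+r+2√r·y)^N dμ(y)] = 0. -/
open MeasureTheory Filter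

/-- In the maximal current phase, atoms lying in (−(1+r)/(2√r), −1) do not
contribute to the leading asymptotics of the partition function. -/
theorem stmt13 (r : ℝ) (hr : r ∈ Set.Ioo (0 : ℝ) 1)
    (μ : Measure ℝ) [IsFiniteMeasure μ]
    (hsupp : μ (Set.Iic (-(1 + r) / (2 * Real.sqrt r))) = 0)
    (ε : ℝ) (hε : 0 < ε) (f : ℝ → ℝ) (hfm : Measurable f)
    (hdens : μ.restrict (Set.Icc (-1 : ℝ) 1)
      = (volume.restrict (Set.Icc (-1 : ℝ) 1)).withDensity
          (fun y => ENNReal.ofReal (f y)))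
    (hflb : ∀ y ∈ Set.Icc (-1 : ℝ) 1, ε * Real.sqrt (1 - y ^ 2) ≤ f y)
    (k : ℕ) (y : Fin k → ℝ) (hy : StrictAnti y)
    (hyloc : ∀ j, y j ∈ Set.Ioo (-(1 + r) / (2 * Real.sqrt r)) (-1 : ℝ)) :
    Tendsto (fun N : ℕ =>
        (∑ j : Fin k, (1 + r + 2 * Real.sqrt r * y j) ^ N * (μ {y j}).toReal)
          / ∫ x in Set.Icc (-1 : ℝ) 1, (1 + r + 2 * Real.sqrt r * x) ^ N ∂μ)
      atTop (nhds 0) := by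
  obtain ⟨hr0, hr1⟩ := hr
  set s := Real.sqrt r with hs
  have hs0 : 0 < s := Real.sqrt_pos.mpr hr0
  have hs1 : s < 1 := by
    rw [hs, show (1:ℝ) = Real.sqrt 1 by simp]
    exact Real.sqrt_lt_sqrt hr0.le hr1
  have hsr : s ^ 2 = r := Real.sq_sqrt hr0.le
  set b : ℝ := 1 + r - 2 * s with hb
  have hb0 : 0 < b := by nlinarith [sq_nonneg (1 - s)]
  have hblt : b < 1 + r := by nlinarith
  have hr1p : (0:ℝ) < 1 + r := by linarith
  -- positivity of g on [-1, ∞)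
  have hgpos : ∀ x : ℝ, -1 ≤ x → 0 < 1 + r + 2 * s * x := by
    intro x hx; nlinarith
  -- the measure of [0, 1/2] is positive
  have hsub : Set.Icc (0:ℝ) (1/2) ⊆ Set.Icc (-1:ℝ) 1 :=
    Set.Icc_subset_Icc (by norm_num) (by norm_num)
  have hμeq : μ (Set.Icc (0:ℝ) (1/2))
      = ∫⁻ x in Set.Icc (0:ℝ) (1/2), ENNReal.ofReal (f x) := by
    have h1 : μ (Set.Icc (0:ℝ) (1/2))
        = μ.restrict (Set.Icc (-1:ℝ) 1) (Set.Icc (0:ℝ) (1/2)) := by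
      rw [Measure.restrict_apply measurableSet_Icc, Set.inter_eq_left.mpr hsub]
    rw [h1, hdens, withDensity_apply _ measurableSet_Icc,
      Measure.restrict_restrict measurableSet_Icc, Set.inter_eq_left.mpr hsub]
  have hme : μ (Set.Icc (0:ℝ) (1/2)) ≠ 0 := by
    have hlow : ENNReal.ofReal (ε * Real.sqrt (3/4)) * volume (Set.Icc (0:ℝ) (1/2))
        ≤ μ (Set.Icc (0:ℝ) (1/2)) := by
      rw [hμeq, ← setLIntegral_const]
      refine setLIntegral_mono (hfm.ennreal_ofReal) ?_
      intro x hx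
      refine ENNReal.ofReal_le_ofReal ?_
      have hx' : x ∈ Set.Icc (-1:ℝ) 1 := hsub hx
      have h2 : Real.sqrt (3/4) ≤ Real.sqrt (1 - x ^ 2) := by
        apply Real.sqrt_le_sqrt
        obtain ⟨hx0, hx1⟩ := hx
        nlinarith
      calc ε * Real.sqrt (3/4) ≤ ε * Real.sqrt (1 - x ^ 2) := by
            exact mul_le_mul_of_nonneg_left h2 hε.le
        _ ≤ f x := hflb x hx'
    intro h0
    rw [h0] at hlow
    have hvol : volume (Set.Icc (0:ℝ) (1/2)) = ENNReal.ofReal (1/2) := by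
      rw [Real.volume_Icc]; norm_num
    have hp : 0 < ENNReal.ofReal (ε * Real.sqrt (3/4)) * volume (Set.Icc (0:ℝ) (1/2)) := by
      rw [hvol]
      apply ENNReal.mul_pos
      · simp only [ne_eq, ENNReal.ofReal_eq_zero, not_le]
        positivity
      · simp only [ne_eq, ENNReal.ofReal_eq_zero, not_le]; norm_num
    exact absurd hlow (not_le.mpr hp)
  set c := (μ (Set.Icc (0:ℝ) (1/2))).toReal with hc
  have hc0 : 0 < c := ENNReal.toReal_pos hme (measure_ne_top μ _)
  -- integrability
  have hcont : ∀ N : ℕ, Continuous (fun x : ℝ => (1 + r + 2 * s * x) ^ N) := by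
    intro N; fun_prop
  have hInt : ∀ N : ℕ, IntegrableOn (fun x : ℝ => (1 + r + 2 * s * x) ^ N)
      (Set.Icc (-1:ℝ) 1) μ := fun N =>
    (hcont N).continuousOn.integrableOn_compact isCompact_Icc
  -- denominator lower bound
  have hD : ∀ N : ℕ, (1 + r) ^ N * c
      ≤ ∫ x in Set.Icc (-1:ℝ) 1, (1 + r + 2 * s * x) ^ N ∂μ := by
    intro N
    have step1 : ∫ x in Set.Icc (0:ℝ) (1/2), (1 + r + 2 * s * x) ^ N ∂μ
        ≤ ∫ x in Set.Icc (-1:ℝ) 1, (1 + r + 2 * s * x) ^ N ∂μ := by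
      apply setIntegral_mono_set (hInt N)
      · filter_upwards [ae_restrict_mem measurableSet_Icc] with x hx
        exact pow_nonneg (hgpos x hx.1).le N
      · exact Filter.Eventually.of_forall hsub
    have step2 : (1 + r) ^ N * c
        ≤ ∫ x in Set.Icc (0:ℝ) (1/2), (1 + r + 2 * s * x) ^ N ∂μ := by
      have heq : ∫ _ in Set.Icc (0:ℝ) (1/2), ((1 + r) ^ N : ℝ) ∂μ = (1 + r) ^ N * c := by
        rw [setIntegral_const, smul_eq_mul, hc, mul_comm, measureReal_def]
      rw [← heq]
      apply setIntegral_mono_on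
      · exact (integrable_const _).integrableOn
      · exact (hInt N).mono_set hsub
      · exact measurableSet_Icc
      · intro x hx
        apply pow_le_pow_left₀ hr1p.le
        nlinarith [hx.1]
    linarith
  have hDpos : ∀ N : ℕ, 0 < ∫ x in Set.Icc (-1:ℝ) 1, (1 + r + 2 * s * x) ^ N ∂μ := by
    intro N
    refine lt_of_lt_of_le ?_ (hD N)
    positivity
  -- numerator bounds
  set M : ℝ := ∑ j : Fin k, (μ {y j}).toReal with hM
  have hM0 : 0 ≤ M := Finset.sum_nonneg fun j _ => ENNReal.toReal_nonneg
  have hA0 : ∀ N : ℕ, 0 ≤ ∑ j : Fin k, (1 + r + 2 * s * y j) ^ N * (μ {y j}).toReal := by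
    intro N
    apply Finset.sum_nonneg
    intro j _
    have h1 : 0 < 1 + r + 2 * s * y j := by
      have h2 := (hyloc j).1
      rw [div_lt_iff₀ (by positivity : (0:ℝ) < 2 * s)] at h2
      nlinarith
    positivity
  have hAle : ∀ N : ℕ,
      (∑ j : Fin k, (1 + r + 2 * s * y j) ^ N * (μ {y j}).toReal) ≤ b ^ N * M := by
    intro N
    rw [hM, Finset.mul_sum]
    apply Finset.sum_le_sum
    intro j _
    apply mul_le_mul_of_nonneg_right _ ENNReal.toReal_nonneg
    apply pow_le_pow_left₀
    · have h2 := (hyloc j).1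
      rw [div_lt_iff₀ (by positivity : (0:ℝ) < 2 * s)] at h2
      nlinarith
    · have h3 := (hyloc j).2
      nlinarith
  -- squeeze
  set q : ℝ := b / (1 + r) with hq
  have hq0 : 0 ≤ q := by positivity
  have hq1 : q < 1 := (div_lt_one hr1p).mpr hblt
  have hT : Tendsto (fun N : ℕ => (M / c) * q ^ N) atTop (nhds 0) := by
    have := (tendsto_pow_atTop_nhds_zero_of_lt_one hq0 hq1).const_mul (M / c)
    simpa using this
  apply squeeze_zero (fun N => div_nonneg (hA0 N) (hDpos N).le) _ hT
  intro N
  have hbound : (∑ j : Fin k, (1 + r + 2 * s * y j) ^ N * (μ {y j}).toReal)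
      / (∫ x in Set.Icc (-1:ℝ) 1, (1 + r + 2 * s * x) ^ N ∂μ)
      ≤ (b ^ N * M) / ((1 + r) ^ N * c) := by
    apply div_le_div₀ (by positivity) (hAle N) (by positivity) (hD N)
  refine hbound.trans_eq ?_
  rw [hq, div_pow]
  field_simp
end

section
/- Let r ∈ (0,1) and let g : [−1,1] → ℝ be continuous, of the form g(y) = √(1−y²)·h(y) with h continuous and h(y) ≥ ε > 0. Then lim_{N→∞} [∫_{−1}^{1}(1+r+2√r·y)^{N−1}·g(y)·dy] / [∫_{−1}^{1}(1+r+2√r·y)^{N}·g(y)·dy] = 1/(1+√r)². -/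
open Filter

set_option maxHeartbeats 2000000 in
/-- Ratio of consecutive moments in the maximal current phase converges to
1/(1+√r)². -/
theorem stmt18 (r ε : ℝ) (hr : r ∈ Set.Ioo (0 : ℝ) 1) (hε : 0 < ε)
    (g h : ℝ → ℝ)
    (hgc : ContinuousOn g (Set.Icc (-1 : ℝ) 1))
    (hhc : ContinuousOn h (Set.Icc (-1 : ℝ) 1))
    (hgh : ∀ y ∈ Set.Icc (-1 : ℝ) 1, g y = Real.sqrt (1 - y ^ 2) * h y)
    (hhl : ∀ y ∈ Set.Icc (-1 : ℝ) 1, ε ≤ h y) :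
    Tendsto (fun N : ℕ =>
        (∫ y in (-1 : ℝ)..1, (1 + r + 2 * Real.sqrt r * y) ^ (N - 1) * g y)
          / ∫ y in (-1 : ℝ)..1, (1 + r + 2 * Real.sqrt r * y) ^ N * g y)
      atTop (nhds (1 / (1 + Real.sqrt r) ^ 2)) := by
  obtain ⟨hr0, hr1⟩ := hr
  set s := Real.sqrt r with hsdef
  have hs0 : 0 < s := Real.sqrt_pos.2 hr0
  have hsr : s ^ 2 = r := Real.sq_sqrt hr0.le
  have hs1 : s < 1 := by nlinarith
  set M := (1 + s) ^ 2 with hMdef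
  have hM' : M = 1 + r + 2 * s := by rw [hMdef, ← hsr]; ring
  have hM1 : (1 : ℝ) < M := by nlinarith
  have hM0 : 0 < M := by linarith
  -- g is nonnegative on [-1,1] and positive on (-1,1)
  have hg0 : ∀ y ∈ Set.Icc (-1 : ℝ) 1, 0 ≤ g y := by
    intro y hy
    rw [hgh y hy]
    exact mul_nonneg (Real.sqrt_nonneg _) (le_trans hε.le (hhl y hy))
  have hgpos : ∀ y ∈ Set.Ioo (-1 : ℝ) 1, 0 < g y := by
    intro y hy
    have hy' : y ∈ Set.Icc (-1 : ℝ) 1 := Set.Ioo_subset_Icc_self hy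
    rw [hgh y hy']
    have h1 : 0 < 1 - y ^ 2 := by nlinarith [hy.1, hy.2]
    exact mul_pos (Real.sqrt_pos.2 h1) (lt_of_lt_of_le hε (hhl y hy'))
  -- facts about f y = 1 + r + 2 s y
  have hfpos : ∀ y ∈ Set.Icc (-1 : ℝ) 1, 0 < 1 + r + 2 * s * y := by
    intro y hy; nlinarith [hy.1, hy.2]
  have hfle : ∀ y ∈ Set.Icc (-1 : ℝ) 1, 1 + r + 2 * s * y ≤ M := by
    intro y hy; nlinarith [hy.2]
  have hmono : ∀ y z : ℝ, y ≤ z → 1 + r + 2 * s * y ≤ 1 + r + 2 * s * z := by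
    intro y z hyz; nlinarith
  set I : ℕ → ℝ := fun N => ∫ y in (-1 : ℝ)..1, (1 + r + 2 * s * y) ^ N * g y
    with hIdef
  have hcont : ∀ N : ℕ,
      ContinuousOn (fun y => (1 + r + 2 * s * y) ^ N * g y) (Set.Icc (-1 : ℝ) 1) := by
    intro N
    exact (((continuous_const.add (continuous_const.mul continuous_id)).pow N).continuousOn).mul hgc
  have hInt : ∀ (N : ℕ) (u v : ℝ), -1 ≤ u → u ≤ v → v ≤ 1 →
      IntervalIntegrable (fun y => (1 + r + 2 * s * y) ^ N * g y)
        MeasureTheory.volume u v := by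
    intro N u v h1 h2 h3
    apply ContinuousOn.intervalIntegrable
    apply (hcont N).mono
    rw [Set.uIcc_of_le h2]
    exact Set.Icc_subset_Icc h1 h3
  have hgInt : ∀ (u v : ℝ), -1 ≤ u → u ≤ v → v ≤ 1 →
      IntervalIntegrable g MeasureTheory.volume u v := by
    intro u v h1 h2 h3
    apply ContinuousOn.intervalIntegrable
    apply hgc.mono
    rw [Set.uIcc_of_le h2]
    exact Set.Icc_subset_Icc h1 h3
  have hIpos : ∀ N, 0 < I N := by
    intro N
    apply intervalIntegral.intervalIntegral_pos_of_pos_on (hInt N (-1) 1 le_rfl (by norm_num) le_rfl)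
    · intro x hx
      exact mul_pos (pow_pos (hfpos x (Set.Ioo_subset_Icc_self hx)) N) (hgpos x hx)
    · norm_num
  -- Upper bound: I (N+1) ≤ M * I N
  have hub : ∀ N : ℕ, I (N + 1) ≤ M * I N := by
    intro N
    have hle : I (N + 1) ≤ ∫ y in (-1 : ℝ)..1, M * ((1 + r + 2 * s * y) ^ N * g y) := by
      apply intervalIntegral.integral_mono_on (by norm_num)
        (hInt (N + 1) _ _ le_rfl (by norm_num) le_rfl)
        ((hInt N _ _ le_rfl (by norm_num) le_rfl).const_mul M)
      intro y hy
      have h1 := hfpos y hy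
      have h2 := hfle y hy
      have h3 := hg0 y hy
      calc (1 + r + 2 * s * y) ^ (N + 1) * g y
          = (1 + r + 2 * s * y) * ((1 + r + 2 * s * y) ^ N * g y) := by ring
        _ ≤ M * ((1 + r + 2 * s * y) ^ N * g y) :=
            mul_le_mul_of_nonneg_right h2 (mul_nonneg (pow_nonneg h1.le N) h3)
    rwa [intervalIntegral.integral_const_mul] at hle
  -- Key eventual lower bound
  have key : ∀ δ : ℝ, 0 < δ → δ ≤ s →
      ∀ᶠ N : ℕ in atTop, M - 2 * δ ≤ I (N + 1) / I N := by
    intro δ hδ0 hδs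
    set a : ℝ := 1 - δ / (2 * s) with hadef
    have hds : 0 < δ / (2 * s) := div_pos hδ0 (by linarith)
    have hds2 : δ / (2 * s) ≤ 1 / 2 := by
      rw [div_le_div_iff₀ (by linarith) (by norm_num)]
      linarith
    have ha1 : a < 1 := by rw [hadef]; linarith
    have ham1 : (-1 : ℝ) < a := by rw [hadef]; linarith
    set b : ℝ := (a + 1) / 2 with hbdef
    set c : ℝ := (b + 1) / 2 with hcdef
    have hab : a < b := by rw [hbdef]; linarith
    have hb1 : b < 1 := by rw [hbdef]; linarith
    have hbc : b < c := by rw [hcdef]; linarith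
    have hc1 : c < 1 := by rw [hcdef]; linarith
    have hbm1 : (-1 : ℝ) < b := by linarith
    have hcm1 : (-1 : ℝ) < c := by linarith
    have hfa : 1 + r + 2 * s * a = M - δ := by
      rw [hM', hadef]; field_simp; ring
    have hfb : 1 + r + 2 * s * b = M - δ / 2 := by
      rw [hM', hbdef, hadef]; field_simp; ring
    have hMδ : 0 < M - δ := by nlinarith
    have hMδ2 : 0 < M - δ / 2 := by nlinarith
    have hδδ : M - δ < M - δ / 2 := by linarith
    set q : ℝ := (M - δ) / (M - δ / 2) with hqdef
    have hq0 : 0 ≤ q := le_of_lt (div_pos hMδ hMδ2)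
    have hq1 : q < 1 := (div_lt_one hMδ2).2 hδδ
    set C : ℝ := ∫ y in (-1 : ℝ)..1, g y with hCdef
    set c₀ : ℝ := ∫ y in b..c, g y with hc₀def
    have hc₀ : 0 < c₀ := by
      apply intervalIntegral.intervalIntegral_pos_of_pos_on (hgInt b c hbm1.le hbc.le hc1.le)
      · intro x hx
        exact hgpos x ⟨lt_trans hbm1 hx.1, lt_trans hx.2 hc1⟩
      · exact hbc
    have hC0 : 0 ≤ C :=
      intervalIntegral.integral_nonneg (by norm_num) (fun u hu => hg0 u hu)
    -- tail bound
    have tail_le : ∀ N : ℕ,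
        (∫ y in (-1 : ℝ)..a, (1 + r + 2 * s * y) ^ N * g y) ≤ (M - δ) ^ N * C := by
      intro N
      have step1 : (∫ y in (-1 : ℝ)..a, (1 + r + 2 * s * y) ^ N * g y)
          ≤ ∫ y in (-1 : ℝ)..a, (M - δ) ^ N * g y := by
        apply intervalIntegral.integral_mono_on ham1.le
          (hInt N _ _ le_rfl ham1.le ha1.le)
          ((hgInt _ _ le_rfl ham1.le ha1.le).const_mul _)
        intro y hy
        have hyI : y ∈ Set.Icc (-1 : ℝ) 1 := ⟨hy.1, le_trans hy.2 ha1.le⟩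
        apply mul_le_mul_of_nonneg_right _ (hg0 y hyI)
        rw [← hfa]
        exact pow_le_pow_left₀ (hfpos y hyI).le (hmono y a hy.2) N
      have step2 : (∫ y in (-1 : ℝ)..a, g y) ≤ C := by
        have hsplit : (∫ y in (-1 : ℝ)..a, g y) + ∫ y in a..1, g y = C :=
          intervalIntegral.integral_add_adjacent_intervals
            (hgInt _ _ le_rfl ham1.le ha1.le) (hgInt _ _ ham1.le ha1.le le_rfl)
        have hnn : 0 ≤ ∫ y in a..1, g y :=
          intervalIntegral.integral_nonneg ha1.le
            (fun u hu => hg0 u ⟨le_trans ham1.le hu.1, hu.2⟩)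
        linarith
      calc (∫ y in (-1 : ℝ)..a, (1 + r + 2 * s * y) ^ N * g y)
          ≤ ∫ y in (-1 : ℝ)..a, (M - δ) ^ N * g y := step1
        _ = (M - δ) ^ N * ∫ y in (-1 : ℝ)..a, g y :=
            intervalIntegral.integral_const_mul _ _
        _ ≤ (M - δ) ^ N * C :=
            mul_le_mul_of_nonneg_left step2 (pow_nonneg hMδ.le N)
    -- lower bound on I N
    have Ilow : ∀ N : ℕ, (M - δ / 2) ^ N * c₀ ≤ I N := by
      intro N
      have hmid : (M - δ / 2) ^ N * c₀ ≤ ∫ y in b..c, (1 + r + 2 * s * y) ^ N * g y := by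
        have : (∫ y in b..c, (M - δ / 2) ^ N * g y)
            ≤ ∫ y in b..c, (1 + r + 2 * s * y) ^ N * g y := by
          apply intervalIntegral.integral_mono_on hbc.le
            ((hgInt _ _ hbm1.le hbc.le hc1.le).const_mul _)
            (hInt N _ _ hbm1.le hbc.le hc1.le)
          intro y hy
          have hyI : y ∈ Set.Icc (-1 : ℝ) 1 := ⟨le_trans hbm1.le hy.1, le_trans hy.2 hc1.le⟩
          apply mul_le_mul_of_nonneg_right _ (hg0 y hyI)
          rw [← hfb]
          exact pow_le_pow_left₀ (by rw [hfb]; exact hMδ2.le) (hmono b y hy.1) N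
        rwa [intervalIntegral.integral_const_mul] at this
      have hsplit1 : (∫ y in (-1 : ℝ)..b, (1 + r + 2 * s * y) ^ N * g y)
          + ∫ y in b..1, (1 + r + 2 * s * y) ^ N * g y = I N :=
        intervalIntegral.integral_add_adjacent_intervals
          (hInt N _ _ le_rfl hbm1.le hb1.le) (hInt N _ _ hbm1.le hb1.le le_rfl)
      have hsplit2 : (∫ y in b..c, (1 + r + 2 * s * y) ^ N * g y)
          + ∫ y in c..1, (1 + r + 2 * s * y) ^ N * g y
          = ∫ y in b..1, (1 + r + 2 * s * y) ^ N * g y :=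
        intervalIntegral.integral_add_adjacent_intervals
          (hInt N _ _ hbm1.le hbc.le hc1.le) (hInt N _ _ (by linarith) hc1.le le_rfl)
      have h1 : 0 ≤ ∫ y in (-1 : ℝ)..b, (1 + r + 2 * s * y) ^ N * g y := by
        apply intervalIntegral.integral_nonneg hbm1.le
        intro u hu
        have huI : u ∈ Set.Icc (-1 : ℝ) 1 := ⟨hu.1, le_trans hu.2 hb1.le⟩
        exact mul_nonneg (pow_nonneg (hfpos u huI).le N) (hg0 u huI)
      have h2 : 0 ≤ ∫ y in c..1, (1 + r + 2 * s * y) ^ N * g y := by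
        apply intervalIntegral.integral_nonneg hc1.le
        intro u hu
        have huI : u ∈ Set.Icc (-1 : ℝ) 1 := ⟨le_trans hcm1.le hu.1, hu.2⟩
        exact mul_nonneg (pow_nonneg (hfpos u huI).le N) (hg0 u huI)
      linarith
    -- the geometric factor tends to zero
    have hgeo : Tendsto (fun N : ℕ => q ^ N * (C / c₀)) atTop (nhds 0) := by
      have := (tendsto_pow_atTop_nhds_zero_of_lt_one hq0 hq1).mul_const (C / c₀)
      simpa using this
    have hev : ∀ᶠ N : ℕ in atTop, q ^ N * (C / c₀) < δ / M :=
      hgeo.eventually_lt_const (div_pos hδ0 hM0)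
    filter_upwards [hev] with N hN
    have hIN := hIpos N
    -- tail of I N
    set T : ℝ := ∫ y in (-1 : ℝ)..a, (1 + r + 2 * s * y) ^ N * g y with hTdef
    have hT0 : 0 ≤ T := by
      apply intervalIntegral.integral_nonneg ham1.le
      intro u hu
      have huI : u ∈ Set.Icc (-1 : ℝ) 1 := ⟨hu.1, le_trans hu.2 ha1.le⟩
      exact mul_nonneg (pow_nonneg (hfpos u huI).le N) (hg0 u huI)
    have hTI : T ≤ δ / M * I N := by
      have e1 : q ^ N * (C / c₀) * ((M - δ / 2) ^ N * c₀) = (M - δ) ^ N * C := by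
        rw [hqdef, div_pow, div_mul_div_comm,
          div_mul_cancel₀ _ (mul_ne_zero (pow_pos hMδ2 N).ne' hc₀.ne')]
      have e2 : T ≤ q ^ N * (C / c₀) * ((M - δ / 2) ^ N * c₀) := by
        rw [e1]; exact tail_le N
      have e3 : q ^ N * (C / c₀) * ((M - δ / 2) ^ N * c₀)
          ≤ δ / M * ((M - δ / 2) ^ N * c₀) := by
        apply mul_le_mul_of_nonneg_right hN.le
        exact le_of_lt (mul_pos (pow_pos hMδ2 N) hc₀)
      have e4 : δ / M * ((M - δ / 2) ^ N * c₀) ≤ δ / M * I N :=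
        mul_le_mul_of_nonneg_left (Ilow N) (le_of_lt (div_pos hδ0 hM0))
      linarith
    have hMT : M * T ≤ δ * I N := by
      have := mul_le_mul_of_nonneg_left hTI hM0.le
      calc M * T ≤ M * (δ / M * I N) := this
        _ = δ * I N := by rw [← mul_assoc, mul_comm M (δ / M), div_mul_cancel₀ δ hM0.ne']
    -- lower bound on I (N+1)
    have hsplitI : T + (∫ y in a..1, (1 + r + 2 * s * y) ^ N * g y) = I N :=
      intervalIntegral.integral_add_adjacent_intervals
        (hInt N _ _ le_rfl ham1.le ha1.le) (hInt N _ _ ham1.le ha1.le le_rfl)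
    have hsplitI1 : (∫ y in (-1 : ℝ)..a, (1 + r + 2 * s * y) ^ (N + 1) * g y)
        + (∫ y in a..1, (1 + r + 2 * s * y) ^ (N + 1) * g y) = I (N + 1) :=
      intervalIntegral.integral_add_adjacent_intervals
        (hInt (N + 1) _ _ le_rfl ham1.le ha1.le) (hInt (N + 1) _ _ ham1.le ha1.le le_rfl)
    have hA0 : 0 ≤ ∫ y in (-1 : ℝ)..a, (1 + r + 2 * s * y) ^ (N + 1) * g y := by
      apply intervalIntegral.integral_nonneg ham1.le
      intro u hu
      have huI : u ∈ Set.Icc (-1 : ℝ) 1 := ⟨hu.1, le_trans hu.2 ha1.le⟩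
      exact mul_nonneg (pow_nonneg (hfpos u huI).le (N + 1)) (hg0 u huI)
    have hB : (M - δ) * (∫ y in a..1, (1 + r + 2 * s * y) ^ N * g y)
        ≤ ∫ y in a..1, (1 + r + 2 * s * y) ^ (N + 1) * g y := by
      have hle : (∫ y in a..1, (M - δ) * ((1 + r + 2 * s * y) ^ N * g y))
          ≤ ∫ y in a..1, (1 + r + 2 * s * y) ^ (N + 1) * g y := by
        apply intervalIntegral.integral_mono_on ha1.le
          ((hInt N _ _ ham1.le ha1.le le_rfl).const_mul _)
          (hInt (N + 1) _ _ ham1.le ha1.le le_rfl)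
        intro y hy
        have hyI : y ∈ Set.Icc (-1 : ℝ) 1 := ⟨le_trans ham1.le hy.1, hy.2⟩
        have hge : M - δ ≤ 1 + r + 2 * s * y := by
          rw [← hfa]; exact hmono a y hy.1
        calc (M - δ) * ((1 + r + 2 * s * y) ^ N * g y)
            ≤ (1 + r + 2 * s * y) * ((1 + r + 2 * s * y) ^ N * g y) :=
              mul_le_mul_of_nonneg_right hge
                (mul_nonneg (pow_nonneg (hfpos y hyI).le N) (hg0 y hyI))
          _ = (1 + r + 2 * s * y) ^ (N + 1) * g y := by ring
      rwa [intervalIntegral.integral_const_mul] at hle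
    have hB0 : I N - T = ∫ y in a..1, (1 + r + 2 * s * y) ^ N * g y := by linarith
    have h4 : (M - δ) * (I N - T) ≤ I (N + 1) := by
      rw [hB0]; linarith
    rw [le_div_iff₀ hIN]
    have h5 : (M - δ) * (I N - T) = M * I N - M * T - δ * I N + δ * T := by ring
    have h6 : (M - 2 * δ) * I N = M * I N - 2 * (δ * I N) := by ring
    have h7 : 0 ≤ δ * T := mul_nonneg hδ0.le hT0
    linarith
  -- the ratio I (N+1) / I N tends to M
  have hR : Tendsto (fun N : ℕ => I (N + 1) / I N) atTop (nhds M) := by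
    rw [Metric.tendsto_atTop]
    intro e he
    have hδ0 : 0 < min (e / 4) s := lt_min (by linarith) hs0
    obtain ⟨N₀, hN₀⟩ := eventually_atTop.1 (key _ hδ0 (min_le_right _ _))
    refine ⟨N₀, fun n hn => ?_⟩
    have h1 := hN₀ n hn
    have hub' := hub n
    have hIp' := hIpos n
    clear_value I M s
    have h2 : I (n + 1) / I n ≤ M := by
      rw [div_le_iff₀ (hIpos n)]
      linarith [hub n]
    have h3 : min (e / 4) s ≤ e / 4 := min_le_left _ _
    rw [Real.dist_eq, abs_lt]
    constructor
    · linarith only [h1, h2, h3, he, hδ0]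
    · linarith only [h1, h2, h3, he, hδ0]
  have hR' : Tendsto (fun N : ℕ => I N / I (N + 1)) atTop (nhds (1 / M)) := by
    have hinv := hR.inv₀ (ne_of_gt hM0)
    have heq : (fun N : ℕ => (I (N + 1) / I N)⁻¹) = fun N : ℕ => I N / I (N + 1) := by
      funext N; rw [inv_div]
    rw [heq] at hinv
    rwa [one_div]
  rw [show (1 : ℝ) / (1 + s) ^ 2 = 1 / M from rfl]
  rw [← tendsto_add_atTop_iff_nat 1]
  have hfun : (fun n : ℕ =>
      (∫ y in (-1 : ℝ)..1, (1 + r + 2 * s * y) ^ (n + 1 - 1) * g y)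
        / ∫ y in (-1 : ℝ)..1, (1 + r + 2 * s * y) ^ (n + 1) * g y)
      = fun n : ℕ => I n / I (n + 1) := by
    funext n
    simp [hIdef]
  exact hfun ▸ hR'
end
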